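/- Primal ensembling reduces Bregman variance for jointly convex divergences: if D_F is jointly convex in both arguments and X_1,…,X_n are i.i.d. copies of X, then with X̂ = (1/n)∑ X_i, one has E D_F[ℰX̂ || X̂] ≤ E D_F[ℰX || X]. -/

import Mathlib

open MeasureTheory ProbabilityTheory

set_option maxHeartbeats 1000000

open Filter Topology in
/-- Directional derivative from a gradient. -/
private lemma dirderiv_tendsto {d : ℕ} {F : EuclideanSpace ℝ (Fin d) → ℝ}
    {G x v : EuclideanSpace ℝ (Fin d)} (h : HasGradientAt F G x) :
    Tendsto (fun t : ℝ => (F (x + t • v) - F x) / t) (𝓝[≠] (0:ℝ))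
      (𝓝 ((inner ℝ G v : ℝ))) := by
  have hL : HasDerivAt (fun t : ℝ => x + t • v) v 0 := by
    simpa using ((hasDerivAt_id (0:ℝ)).smul_const v).const_add x
  have hc : HasDerivAt (fun t : ℝ => F (x + t • v)) ((inner ℝ G v : ℝ)) 0 := by
    have hF' : HasFDerivAt F (InnerProductSpace.toDual ℝ _ G) ((fun t : ℝ => x + t • v) 0) := by
      simpa using h.hasFDerivAt
    have := hF'.comp_hasDerivAt 0 hL
    simp only [InnerProductSpace.toDual_apply_apply] at this
    exact this
  have := hasDerivAt_iff_tendsto_slope.1 hc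
  refine this.congr' ?_
  filter_upwards [self_mem_nhdsWithin] with t ht
  simp [slope_def_field, div_eq_inv_mul]

open Filter Topology in
/-- Gradient inequality for convex functions. -/
private lemma grad_ineq {d : ℕ} {S : Set (EuclideanSpace ℝ (Fin d))}
    {F : EuclideanSpace ℝ (Fin d) → ℝ} (hF : ConvexOn ℝ S F)
    {G x z : EuclideanSpace ℝ (Fin d)} (hx : x ∈ S) (hz : z ∈ S)
    (h : HasGradientAt F G x) : (inner ℝ G (z - x) : ℝ) ≤ F z - F x := by
  have hd := (dirderiv_tendsto (v := z - x) h).mono_left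
    (nhdsWithin_mono _ (fun t (ht : t ∈ Set.Ioi (0:ℝ)) => ne_of_gt ht))
  refine le_of_tendsto hd ?_
  filter_upwards [Ioo_mem_nhdsGT_of_mem (Set.mem_Ico.2 ⟨le_refl (0:ℝ), one_pos⟩)] with t ht
  have hcv := hF.2 hx hz (by linarith [ht.2] : (0:ℝ) ≤ 1 - t) (le_of_lt ht.1) (by ring)
  have hx' : (1 - t) • x + t • z = x + t • (z - x) := by
    rw [smul_sub, sub_smul, one_smul]; abel
  rw [hx'] at hcv
  simp only [smul_eq_mul] at hcv
  rw [div_le_iff₀ ht.1]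
  nlinarith [ht.1]

/-- Primal ensembling reduces the Bregman variance for jointly convex divergences:
if `D_F` is jointly convex and `X₁,…,Xₙ` are i.i.d. copies of `X`, then with
`X̂ = (1/n) ∑ᵢ Xᵢ`, one has `E D_F[ℰX̂ ‖ X̂] ≤ E D_F[ℰX ‖ X]`. -/
theorem primal_ensembling_reduces_variance {d : ℕ}
    (S : Set (EuclideanSpace ℝ (Fin d))) (hSc : IsClosed S) (hSv : Convex ℝ S)
    (F : EuclideanSpace ℝ (Fin d) → ℝ)
    (f' g : EuclideanSpace ℝ (Fin d) → EuclideanSpace ℝ (Fin d))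
    (hF : StrictConvexOn ℝ S F)
    (hdiff : ∀ x ∈ S, HasGradientAt F (f' x) x)
    (hg : ∀ x ∈ S, g (f' x) = x)
    (D : EuclideanSpace ℝ (Fin d) → EuclideanSpace ℝ (Fin d) → ℝ)
    (hD : ∀ y x, D y x = F y - F x - ((inner ℝ (f' x) (y - x) : ℝ)))
    -- D is jointly convex in both arguments
    (hDjc : ConvexOn ℝ (S ×ˢ S) (fun p : EuclideanSpace ℝ (Fin d) × EuclideanSpace ℝ (Fin d) => D p.1 p.2))
    {Ω : Type*} [MeasurableSpace Ω] (μ : Measure Ω) [IsProbabilityMeasure μ]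
    (n : ℕ) (hn : 0 < n)
    (X : Ω → EuclideanSpace ℝ (Fin d)) (Xs : Fin n → Ω → EuclideanSpace ℝ (Fin d))
    (hXm : Measurable X) (hXsm : ∀ i, Measurable (Xs i))
    -- the Xᵢ are i.i.d. copies of X
    (hiid : iIndepFun Xs μ)
    (hid : ∀ i, IdentDistrib (Xs i) X μ μ)
    (hXS : ∀ᵐ ω ∂μ, X ω ∈ S) (hXsS : ∀ i, ∀ᵐ ω ∂μ, Xs i ω ∈ S)
    -- the ensemble prediction
    (Xhat : Ω → EuclideanSpace ℝ (Fin d))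
    (hXhat : ∀ ω, Xhat ω = (n : ℝ)⁻¹ • ∑ i, Xs i ω)
    -- dual means
    (EX EXhat : EuclideanSpace ℝ (Fin d))
    (hEX : EX = g (∫ ω, f' (X ω) ∂μ)) (hEXhat : EXhat = g (∫ ω, f' (Xhat ω) ∂μ))
    (hrangeX : f' EX = ∫ ω, f' (X ω) ∂μ) (hmemX : EX ∈ S)
    (hrangeXhat : f' EXhat = ∫ ω, f' (Xhat ω) ∂μ) (hmemXhat : EXhat ∈ S)
    -- integrability
    (hdint : Integrable (fun ω => f' (X ω)) μ)
    (hdinth : Integrable (fun ω => f' (Xhat ω)) μ)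
    (hintV : Integrable (fun ω => D EX (X ω)) μ)
    (hintVh : Integrable (fun ω => D EXhat (Xhat ω)) μ)
    (hintz : ∀ z ∈ S, Integrable (fun ω => D z (Xhat ω)) μ) :
    ∫ ω, D EXhat (Xhat ω) ∂μ ≤ ∫ ω, D EX (X ω) ∂μ := by
  classical
  have hSm : MeasurableSet S := hSc.measurableSet
  -- F is continuous on S
  have hcontF : ContinuousOn F S := fun x hx =>
    ((hdiff x hx).hasFDerivAt.continuousAt).continuousWithinAt
  -- the push-forward measure
  set ν : Measure (EuclideanSpace ℝ (Fin d)) := Measure.map X μ with hν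
  have hνS : ∀ᵐ x ∂ν, x ∈ S := by
    rw [hν]
    exact (MeasureTheory.ae_map_iff hXm.aemeasurable hSm).2 hXS
  -- `D EX` is a.e. measurable w.r.t. ν
  have hmeasF : AEMeasurable F ν := by
    have := hcontF.aemeasurable (μ := ν) hSm
    rwa [Measure.restrict_eq_self_of_ae_mem hνS] at this
  have hseq : ∀ k : ℕ, AEMeasurable
      (fun x => ((k:ℝ)+1) * (F (x + ((k:ℝ)+1)⁻¹ • (EX - x)) - F x)) ν := by
    intro k
    have hc : (0:ℝ) ≤ ((k:ℝ)+1)⁻¹ := by positivity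
    have hc1 : ((k:ℝ)+1)⁻¹ ≤ 1 := by
      rw [inv_le_one_iff₀]; right; linarith [Nat.cast_nonneg (α := ℝ) k]
    have hmap : Set.MapsTo (fun x => x + ((k:ℝ)+1)⁻¹ • (EX - x)) S S := by
      intro x hx
      show x + ((k:ℝ)+1)⁻¹ • (EX - x) ∈ S
      have : x + ((k:ℝ)+1)⁻¹ • (EX - x)
          = (1 - ((k:ℝ)+1)⁻¹) • x + ((k:ℝ)+1)⁻¹ • EX := by
        rw [smul_sub, sub_smul, one_smul]; abel
      rw [this]
      exact hSv hx hmemX (by linarith) hc (by ring)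
    have hcont1 : ContinuousOn (fun x => F (x + ((k:ℝ)+1)⁻¹ • (EX - x))) S :=
      hcontF.comp (Continuous.continuousOn (by fun_prop)) hmap
    have := ((continuousOn_const.mul (hcont1.sub hcontF)).aemeasurable (μ := ν) hSm :
      AEMeasurable (fun x => ((k:ℝ)+1) * (F (x + ((k:ℝ)+1)⁻¹ • (EX - x)) - F x)) (ν.restrict S))
    rwa [Measure.restrict_eq_self_of_ae_mem hνS] at this
  have hinner : AEMeasurable (fun x => (inner ℝ (f' x) (EX - x) : ℝ)) ν := by
    refine aemeasurable_of_tendsto_metrizable_ae Filter.atTop hseq ?_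
    filter_upwards [hνS] with x hx
    have hdir := dirderiv_tendsto (v := EX - x) (hdiff x hx)
    have htk : Filter.Tendsto (fun k : ℕ => ((k:ℝ)+1)⁻¹) Filter.atTop (nhdsWithin 0 {(0:ℝ)}ᶜ) := by
      refine tendsto_nhdsWithin_iff.2 ⟨?_, ?_⟩
      · exact tendsto_one_div_add_atTop_nhds_zero_nat.congr (fun k => by rw [one_div])
      · refine Filter.Eventually.of_forall fun k => ?_
        simp only [Set.mem_compl_iff, Set.mem_singleton_iff]
        positivity
    have hcomp := hdir.comp htk
    refine hcomp.congr fun k => ?_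
    show (F (x + ((k:ℝ)+1)⁻¹ • (EX - x)) - F x) / ((k:ℝ)+1)⁻¹
        = ((k:ℝ)+1) * (F (x + ((k:ℝ)+1)⁻¹ • (EX - x)) - F x)
    rw [div_eq_mul_inv, inv_inv, mul_comm]
  have hDm : AEMeasurable (D EX) ν := by
    have : AEMeasurable (fun x => F EX - F x - (inner ℝ (f' x) (EX - x) : ℝ)) ν :=
      (aemeasurable_const.sub hmeasF).sub hinner
    exact this.congr (Filter.Eventually.of_forall fun x => (hD EX x).symm)
  have hDsm : AEStronglyMeasurable (D EX) ν := hDm.aestronglyMeasurable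
  -- integrability and integral identity for each Xᵢ
  have hνint : Integrable (D EX) ν :=
    (integrable_map_measure hDsm hXm.aemeasurable).2 hintV
  have hmapi : ∀ i, Measure.map (Xs i) μ = ν := fun i => (hid i).map_eq
  have hDi : ∀ i : Fin n, Integrable (fun ω => D EX (Xs i ω)) μ := by
    intro i
    have : Integrable (D EX) (Measure.map (Xs i) μ) := by rw [hmapi i]; exact hνint
    exact this.comp_measurable (hXsm i)
  have hDieq : ∀ i : Fin n, ∫ ω, D EX (Xs i ω) ∂μ = ∫ ω, D EX (X ω) ∂μ := by
    intro i
    have h1 : ∫ ω, D EX (Xs i ω) ∂μ = ∫ x, D EX x ∂(Measure.map (Xs i) μ) := by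
      rw [integral_map (hXsm i).aemeasurable (by rw [hmapi i]; exact hDsm)]
    have h2 : ∫ ω, D EX (X ω) ∂μ = ∫ x, D EX x ∂ν := by
      rw [hν, integral_map hXm.aemeasurable hDsm]
    rw [h1, hmapi i, h2]
  -- convexity of D EX in its second argument
  have hφ : ConvexOn ℝ S (fun x => D EX x) := by
    refine ⟨hSv, fun x hx y hy a b ha hb hab => ?_⟩
    have h2 := hDjc.2 (Set.mk_mem_prod hmemX hx) (Set.mk_mem_prod hmemX hy) ha hb hab
    simpa [Prod.smul_mk, Prod.mk_add_mk, Convex.combo_self hab] using h2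
  -- pointwise Jensen
  have hjen : ∀ᵐ ω ∂μ, D EX (Xhat ω) ≤ ∑ i, (n:ℝ)⁻¹ * D EX (Xs i ω) := by
    have hall : ∀ᵐ ω ∂μ, ∀ i, Xs i ω ∈ S := ae_all_iff.2 hXsS
    filter_upwards [hall] with ω hω
    have hsum : Xhat ω = ∑ i, (n:ℝ)⁻¹ • Xs i ω := by
      rw [hXhat ω, Finset.smul_sum]
    rw [hsum]
    exact hφ.map_sum_le (fun i _ => by positivity)
      (by simp [Finset.card_univ]; field_simp) (fun i _ => hω i)
  -- integral of the Jensen bound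
  have hsint : Integrable (fun ω => ∑ i, (n:ℝ)⁻¹ * D EX (Xs i ω)) μ :=
    integrable_finset_sum _ (fun i _ => (hDi i).const_mul _)
  have hmid : ∫ ω, D EX (Xhat ω) ∂μ ≤ ∫ ω, D EX (X ω) ∂μ := by
    have h1 : ∫ ω, D EX (Xhat ω) ∂μ ≤ ∫ ω, ∑ i, (n:ℝ)⁻¹ * D EX (Xs i ω) ∂μ :=
      integral_mono_ae (hintz EX hmemX) hsint hjen
    have h2 : ∫ ω, ∑ i, (n:ℝ)⁻¹ * D EX (Xs i ω) ∂μ = ∫ ω, D EX (X ω) ∂μ := by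
      rw [integral_finset_sum _ (fun i _ => (hDi i).const_mul _)]
      have : ∀ i : Fin n, ∫ ω, (n:ℝ)⁻¹ * D EX (Xs i ω) ∂μ
          = (n:ℝ)⁻¹ * ∫ ω, D EX (X ω) ∂μ := by
        intro i
        rw [integral_const_mul, hDieq i]
      rw [Finset.sum_congr rfl (fun i _ => this i)]
      rw [Finset.sum_const, Finset.card_univ, Fintype.card_fin, nsmul_eq_mul]
      field_simp
    linarith
  -- optimality of EXhat for the ensemble
  have hopt : ∫ ω, D EXhat (Xhat ω) ∂μ ≤ ∫ ω, D EX (Xhat ω) ∂μ := by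
    have hkey : ∫ ω, (D EX (Xhat ω) - D EXhat (Xhat ω)) ∂μ
        = F EX - F EXhat - (inner ℝ (f' EXhat) (EX - EXhat) : ℝ) := by
      have hptw : ∀ ω, D EX (Xhat ω) - D EXhat (Xhat ω)
          = (F EX - F EXhat) - (inner ℝ (f' (Xhat ω)) (EX - EXhat) : ℝ) := by
        intro ω
        rw [hD, hD]
        have : (inner ℝ (f' (Xhat ω)) (EX - Xhat ω) : ℝ)
            - (inner ℝ (f' (Xhat ω)) (EXhat - Xhat ω) : ℝ)
            = (inner ℝ (f' (Xhat ω)) (EX - EXhat) : ℝ) := by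
          rw [← inner_sub_right]
          congr 1
          abel
        linarith [this]
      calc ∫ ω, (D EX (Xhat ω) - D EXhat (Xhat ω)) ∂μ
          = ∫ ω, ((F EX - F EXhat) - (inner ℝ (f' (Xhat ω)) (EX - EXhat) : ℝ)) ∂μ := by
            exact integral_congr_ae (Filter.Eventually.of_forall hptw)
        _ = (F EX - F EXhat) - ∫ ω, (inner ℝ (f' (Xhat ω)) (EX - EXhat) : ℝ) ∂μ := by
            rw [integral_sub (integrable_const _)]
            · simp
            · exact hdinth.inner_const _
        _ = (F EX - F EXhat) - (inner ℝ (f' EXhat) (EX - EXhat) : ℝ) := by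
            congr 1
            have h1 : ∫ ω, (inner ℝ (f' (Xhat ω)) (EX - EXhat) : ℝ) ∂μ
                = ∫ ω, (inner ℝ (EX - EXhat) (f' (Xhat ω)) : ℝ) ∂μ :=
              integral_congr_ae (Filter.Eventually.of_forall fun ω => real_inner_comm _ _)
            rw [h1, integral_inner hdinth, ← hrangeXhat, real_inner_comm]
    have hpos : 0 ≤ F EX - F EXhat - (inner ℝ (f' EXhat) (EX - EXhat) : ℝ) := by
      have := grad_ineq hF.convexOn hmemXhat hmemX (hdiff EXhat hmemXhat)
      linarith
    have := integral_sub (hintz EX hmemX) hintVh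
    rw [this] at hkey
    linarith
  linarith
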